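/- Let x, y be complex numbers with y ≠ 0 and Re y ≥ 0, let θ := arg y ∈ [−π/2, π/2], and let r := |y|. Then P(x,y) = (y^{1/3}/2)·∫_{−∞}^{∞} exp( r^{4/3}·f_θ(s e^{−iθ/3}) − x y^{2/3} s² e^{−2iθ/3} )·e^{−iθ/3} ds, where the integral is absolutely convergent and all fractional powers of y are principal-branch powers. -/

import Mathlib

open Real MeasureTheory

/-- The Pearcey-type integral `P(x,y) = ∫₀^∞ exp(−t⁴ − x t²)·cos(y t) dt`. -/
noncomputable def P (x y : ℂ) : ℂ :=
  ∫ t in Set.Ioi (0 : ℝ), Complex.exp (-(t : ℂ) ^ 4 - x * (t : ℂ) ^ 2) * Complex.cos (y * t)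

/-- The phase function `f_θ(t) = e^{4iθ/3}·(i t − t⁴)`. -/
noncomputable def f (θ : ℝ) (t : ℂ) : ℂ :=
  Complex.exp (Complex.I * (4 * (θ : ℂ) / 3)) * (Complex.I * t - t ^ 4)

namespace PearceyAux

/-- The Gaussian-like integrand `g(t) = exp(−t⁴ − x t² + i y t)`. -/
noncomputable def g (x y : ℂ) (t : ℝ) : ℂ :=
  Complex.exp (-(t : ℂ) ^ 4 - x * (t : ℂ) ^ 2 + Complex.I * y * t)

lemma g_cont (x y : ℂ) : Continuous (g x y) := by
  unfold g
  fun_prop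

lemma g_integrable (x y : ℂ) : Integrable (g x y) := by
  set a := x.re with ha
  set b := y.im with hb
  have hbd : ∀ t : ℝ, ‖g x y t‖ ≤
      Real.exp ((a ^ 2 + b ^ 2 + 1) / 2) * Real.exp (-(1 / 2 : ℝ) * t ^ 2) := by
    intro t
    rw [g, Complex.norm_exp, ← Real.exp_add]
    apply Real.exp_le_exp.mpr
    have hre : (-(t : ℂ) ^ 4 - x * (t : ℂ) ^ 2 + Complex.I * y * t).re
        = -t ^ 4 - a * t ^ 2 - b * t := by
      simp [pow_succ, Complex.mul_re, Complex.mul_im, ha, hb]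
      ring
    rw [hre]
    nlinarith [sq_nonneg (t ^ 2 + a), sq_nonneg (t + b), sq_nonneg (t ^ 2 - 1)]
  exact ((integrable_exp_neg_mul_sq (by norm_num : (0:ℝ) < 1/2)).const_mul _).mono'
    (g_cont x y).aestronglyMeasurable (Filter.Eventually.of_forall hbd)

end PearceyAux

open PearceyAux in
theorem pearcey_rotated_representation (x y : ℂ) (hy : y ≠ 0) (hre : 0 ≤ y.re) :
    Integrable
      (fun s : ℝ =>
        Complex.exp (((‖y‖ : ℂ)) ^ ((4 : ℂ) / 3) *
            f y.arg ((s : ℂ) * Complex.exp (-Complex.I * ((y.arg : ℂ) / 3)))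
          - x * y ^ ((2 : ℂ) / 3) * (s : ℂ) ^ 2 *
            Complex.exp (-Complex.I * (2 * (y.arg : ℂ) / 3))) *
        Complex.exp (-Complex.I * ((y.arg : ℂ) / 3))) ∧
    P x y =
      (y ^ ((1 : ℂ) / 3) / 2) *
        ∫ s : ℝ,
          Complex.exp (((‖y‖ : ℂ)) ^ ((4 : ℂ) / 3) *
              f y.arg ((s : ℂ) * Complex.exp (-Complex.I * ((y.arg : ℂ) / 3)))
            - x * y ^ ((2 : ℂ) / 3) * (s : ℂ) ^ 2 *
              Complex.exp (-Complex.I * (2 * (y.arg : ℂ) / 3))) *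
          Complex.exp (-Complex.I * ((y.arg : ℂ) / 3)) := by
  set θ : ℝ := y.arg with hθ
  set r : ℝ := ‖y‖ with hr
  have hr0 : 0 < r := norm_pos_iff.mpr hy
  set c : ℝ := r ^ ((1 : ℝ) / 3) with hc
  have hc0 : 0 < c := Real.rpow_pos_of_pos hr0 _
  set E : ℂ := Complex.exp (-Complex.I * ((θ : ℂ) / 3)) with hE
  -- basic power identities
  have hc3 : c ^ 3 = r := by
    rw [hc, ← Real.rpow_natCast (r ^ ((1:ℝ)/3)) 3, ← Real.rpow_mul hr0.le]
    norm_num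
  have hc4 : ((c : ℂ)) ^ 4 = (r : ℂ) ^ ((4 : ℂ) / 3) := by
    rw [show ((4 : ℂ) / 3) = (((4 : ℝ) / 3 : ℝ) : ℂ) by norm_num,
      ← Complex.ofReal_cpow hr0.le]
    norm_cast
    rw [hc, ← Real.rpow_natCast (r ^ ((1:ℝ)/3)) 4, ← Real.rpow_mul hr0.le]
    norm_num
  have hlog : Complex.log y = (Real.log r : ℂ) + (θ : ℂ) * Complex.I := rfl
  have key1 : y ^ ((1 : ℂ) / 3) * E = (c : ℂ) := by
    rw [hE, Complex.cpow_def_of_ne_zero hy, ← Complex.exp_add,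
      show Complex.log y * ((1:ℂ)/3) + -Complex.I * ((θ:ℂ)/3)
        = ((Real.log r * (1/3) : ℝ) : ℂ) by rw [hlog]; push_cast; ring,
      ← Complex.ofReal_exp, ← Real.rpow_def_of_pos hr0, hc]
  have key2 : y ^ ((2 : ℂ) / 3) * Complex.exp (-Complex.I * (2 * (θ : ℂ) / 3))
      = (c : ℂ) ^ 2 := by
    have hcc : ((c : ℂ)) ^ 2 = ((c ^ 2 : ℝ) : ℂ) := by push_cast; ring
    rw [Complex.cpow_def_of_ne_zero hy, ← Complex.exp_add,
      show Complex.log y * ((2:ℂ)/3) + -Complex.I * (2 * (θ:ℂ) / 3)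
        = ((Real.log r * (2/3) : ℝ) : ℂ) by rw [hlog]; push_cast; ring,
      ← Complex.ofReal_exp, ← Real.rpow_def_of_pos hr0, hcc]
    norm_cast
    rw [hc, ← Real.rpow_natCast (r ^ ((1:ℝ)/3)) 2, ← Real.rpow_mul hr0.le]
    norm_num
  have hcy : ((c : ℂ)) ^ 3 * Complex.exp (Complex.I * (θ : ℂ)) = y := by
    have : ((c : ℂ)) ^ 3 = ((r : ℝ) : ℂ) := by
      rw [show ((c : ℂ)) ^ 3 = ((c ^ 3 : ℝ) : ℂ) by push_cast; ring, hc3]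
    rw [this, mul_comm Complex.I]
    exact Complex.norm_mul_exp_arg_mul_I y
  -- the exponent identity
  have hA : ∀ s : ℝ,
      (r : ℂ) ^ ((4 : ℂ) / 3) * f θ ((s : ℂ) * E)
        - x * y ^ ((2 : ℂ) / 3) * (s : ℂ) ^ 2 * Complex.exp (-Complex.I * (2 * (θ : ℂ) / 3))
      = -((c * s : ℝ) : ℂ) ^ 4 - x * ((c * s : ℝ) : ℂ) ^ 2 + Complex.I * y * ((c * s : ℝ) : ℂ) := by
    intro s
    have h1 : Complex.exp (Complex.I * (4 * (θ : ℂ) / 3)) * E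
        = Complex.exp (Complex.I * (θ : ℂ)) := by
      rw [hE, ← Complex.exp_add]; congr 1; ring
    have h2 : Complex.exp (Complex.I * (4 * (θ : ℂ) / 3)) * E ^ 4 = 1 := by
      rw [hE, ← Complex.exp_nat_mul, ← Complex.exp_add,
        show Complex.I * (4 * (θ:ℂ) / 3) + (4:ℕ) * (-Complex.I * ((θ:ℂ)/3)) = 0 by
          push_cast; ring, Complex.exp_zero]
    rw [f, show Complex.exp (Complex.I * (4 * (θ:ℂ) / 3)) * (Complex.I * ((s:ℂ) * E) - ((s:ℂ) * E) ^ 4)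
        = Complex.I * (s:ℂ) * (Complex.exp (Complex.I * (4 * (θ:ℂ) / 3)) * E)
          - (s:ℂ) ^ 4 * (Complex.exp (Complex.I * (4 * (θ:ℂ) / 3)) * E ^ 4) by ring,
      h1, h2, ← hc4]
    push_cast
    linear_combination ((c:ℂ) * (s:ℂ) * Complex.I) * hcy - (x * (s:ℂ)^2) * key2
  -- the integrand equals g(c s) * E
  have hFg : ∀ s : ℝ,
      Complex.exp ((r : ℂ) ^ ((4 : ℂ) / 3) * f θ ((s : ℂ) * E)
          - x * y ^ ((2 : ℂ) / 3) * (s : ℂ) ^ 2 *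
            Complex.exp (-Complex.I * (2 * (θ : ℂ) / 3))) * E
        = g x y (c * s) * E := by
    intro s
    rw [hA s]; rfl
  have hgi := g_integrable x y
  have hint : Integrable (fun s : ℝ => g x y (c * s) * E) :=
    (hgi.comp_mul_left' hc0.ne').mul_const E
  constructor
  · exact hint.congr (Filter.Eventually.of_forall fun s => (hFg s).symm)
  · -- P x y = (1/2) ∫ g
    have hPg : P x y = (∫ t : ℝ, g x y t) / 2 := by
      have hpt : ∀ t : ℝ, Complex.exp (-(t : ℂ) ^ 4 - x * (t : ℂ) ^ 2) * Complex.cos (y * t)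
          = (g x y t + g x y (-t)) / 2 := by
        intro t
        have hcos : Complex.cos (y * t)
            = (Complex.exp (y * t * Complex.I) + Complex.exp (-(y * t) * Complex.I)) / 2 := rfl
        rw [hcos, g, g]
        rw [show (-(t:ℝ) : ℝ) = -t from rfl]
        push_cast
        rw [show (-(-(t:ℂ)) ^ 4 - x * (-(t:ℂ)) ^ 2 + Complex.I * y * -(t:ℂ))
            = (-(t:ℂ) ^ 4 - x * (t:ℂ) ^ 2) + (-(y * t * Complex.I)) by ring,
          show (-(t:ℂ) ^ 4 - x * (t:ℂ) ^ 2 + Complex.I * y * (t:ℂ))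
            = (-(t:ℂ) ^ 4 - x * (t:ℂ) ^ 2) + (y * t * Complex.I) by ring,
          Complex.exp_add, Complex.exp_add]
        ring
      rw [P]
      simp_rw [hpt]
      rw [integral_div]
      congr 1
      have hgOn : IntegrableOn (g x y) (Set.Ioi (0:ℝ)) := hgi.integrableOn
      have hgnegOn : IntegrableOn (fun t : ℝ => g x y (-t)) (Set.Ioi (0:ℝ)) := by
        have : Integrable (fun t : ℝ => g x y (-1 * t)) := hgi.comp_mul_left' (by norm_num)
        simpa using this.integrableOn
      rw [integral_add hgOn hgnegOn, integral_comp_neg_Ioi, neg_zero, add_comm,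
        intervalIntegral.integral_Iic_add_Ioi hgi.integrableOn hgOn]
    rw [hPg]
    have : (∫ s : ℝ,
        Complex.exp ((r : ℂ) ^ ((4 : ℂ) / 3) * f θ ((s : ℂ) * E)
          - x * y ^ ((2 : ℂ) / 3) * (s : ℂ) ^ 2 *
            Complex.exp (-Complex.I * (2 * (θ : ℂ) / 3))) * E)
        = (c⁻¹ : ℝ) • ((∫ t : ℝ, g x y t) * E) := by
      simp_rw [hFg]
      rw [integral_mul_const, Measure.integral_comp_mul_left (g x y) c,
        abs_of_pos (inv_pos.mpr hc0), smul_mul_assoc]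
    rw [this, Complex.real_smul]
    push_cast
    rw [div_eq_iff (two_ne_zero)]
    have hcne : (c : ℂ) ≠ 0 := by exact_mod_cast hc0.ne'
    field_simp
    linear_combination (-(∫ t : ℝ, g x y t)) * key1
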